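/- Let m ∈ ℕ, σ > 0, let h : ℝ^m → ℝ be a bounded measurable function, and let u ∈ ℝ^m, v ∈ ℝ, v_h ∈ ℝ. Let U* have law N(u, σ²I_m), let V* have law N(v, σ²), and let U* and V* be independent. Then |P(V* ≤ v_h − h(U*)) − Φ̄((v − v_h + E[h(U*)])/σ)| ≤ ‖h‖_∞² / σ², where ‖h‖_∞ = sup_{x∈ℝ^m} |h(x)|. In other words, the bootstrap probability of the region H = {(x,w) : w ≤ v_h − h(x)} under N((u,v), σ²I_{m+1}) equals Φ̄((v − v_h + E_{σ²}h(u))/σ) up to an error of second order in ‖h‖_∞. -/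

import Mathlib

open MeasureTheory ProbabilityTheory Set
open scoped NNReal

/-- The standard normal density. -/
noncomputable def stdphi (t : ℝ) : ℝ :=
  (Real.sqrt (2 * Real.pi))⁻¹ * Real.exp (-t ^ 2 / 2)

/-- The standard normal upper-tail probability Φ̄. -/
noncomputable def Phibar (x : ℝ) : ℝ := ∫ t in Set.Ioi x, stdphi t

/-- The Gaussian measure `N(μ, σ² I_m)` on `ℝ^m` as a product of one-dimensional
Gaussian measures. -/
noncomputable def gaussianPi {m : ℕ} (μ : Fin m → ℝ) (v : ℝ≥0) :
    Measure (Fin m → ℝ) :=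
  Measure.pi fun i => gaussianReal (μ i) v

lemma sqrt2pi_pos : 0 < Real.sqrt (2 * Real.pi) :=
  Real.sqrt_pos.2 (by positivity)

lemma stdphi_nonneg (t : ℝ) : 0 ≤ stdphi t := by
  unfold stdphi; positivity

lemma two_le_sqrt2pi : 2 ≤ Real.sqrt (2 * Real.pi) := by
  exact Real.le_sqrt_of_sq_le (by nlinarith [Real.pi_gt_three])

lemma stdphi_le_half (t : ℝ) : stdphi t ≤ 1/2 := by
  unfold stdphi
  have h1 : Real.exp (-t^2/2) ≤ 1 := Real.exp_le_one_iff.2 (by nlinarith [sq_nonneg t])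
  have h2 : (Real.sqrt (2*Real.pi))⁻¹ ≤ 1/2 := by
    rw [inv_le_comm₀ (sqrt2pi_pos) (by norm_num)]
    simpa using two_le_sqrt2pi
  calc (Real.sqrt (2 * Real.pi))⁻¹ * Real.exp (-t ^ 2 / 2)
      ≤ (Real.sqrt (2 * Real.pi))⁻¹ * 1 := by
        exact mul_le_mul_of_nonneg_left h1 (le_of_lt (inv_pos.2 sqrt2pi_pos))
    _ ≤ 1/2 := by simpa using h2

lemma stdphi_neg (t : ℝ) : stdphi (-t) = stdphi t := by
  unfold stdphi; ring_nf

lemma stdphi_integrable : Integrable stdphi := by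
  have : Integrable (fun t : ℝ => Real.exp (-(1/2) * t^2)) := integrable_exp_neg_mul_sq (by norm_num)
  have := this.const_mul (Real.sqrt (2 * Real.pi))⁻¹
  refine this.congr (ae_of_all _ fun t => ?_)
  unfold stdphi; ring_nf

lemma hasDerivAt_stdphi (t : ℝ) : HasDerivAt stdphi (-t * stdphi t) t := by
  have h1 : HasDerivAt (fun t : ℝ => -t^2/2) (-t) t := by
    have := ((hasDerivAt_pow 2 t).neg).div_const 2
    simpa using this.congr_deriv (by push_cast; ring)
  have h2 := (h1.exp).const_mul (Real.sqrt (2 * Real.pi))⁻¹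
  unfold stdphi
  refine h2.congr_deriv ?_
  ring

lemma deriv_stdphi_bound (t : ℝ) : |(-t) * stdphi t| ≤ 1/4 := by
  have key : |t| * Real.exp (-t^2/2) ≤ Real.exp (-(1/2)) := by
    have h1 : |t| ≤ Real.exp ((t^2 - 1)/2) := by
      have := Real.add_one_le_exp ((t^2-1)/2)
      nlinarith [sq_nonneg (|t| - 1), sq_abs t]
    calc |t| * Real.exp (-t^2/2) ≤ Real.exp ((t^2-1)/2) * Real.exp (-t^2/2) :=
          mul_le_mul_of_nonneg_right h1 (Real.exp_nonneg _)
      _ = Real.exp (-(1/2)) := by rw [← Real.exp_add]; ring_nf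
  have h4 : 4 * Real.exp (-(1/2)) ≤ Real.sqrt (2 * Real.pi) := by
    rw [show (4:ℝ) * Real.exp (-(1/2)) = Real.sqrt ((4 * Real.exp (-(1/2)))^2) by
      rw [Real.sqrt_sq (by positivity)]]
    apply Real.sqrt_le_sqrt
    have he : Real.exp (-(1/2)) ^ 2 = (Real.exp 1)⁻¹ := by
      rw [← Real.exp_nat_mul]
      norm_num
      rw [Real.exp_neg]
    rw [mul_pow, he]
    have hexp : 2.7182818283 < Real.exp 1 := Real.exp_one_gt_d9
    have hpi : 3.141592 < Real.pi := Real.pi_gt_d6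
    rw [mul_inv_le_iff₀ (by positivity)]
    nlinarith
  have : |(-t) * stdphi t| = (|t| * Real.exp (-t^2/2)) * (Real.sqrt (2*Real.pi))⁻¹ := by
    unfold stdphi
    rw [abs_mul, abs_neg, abs_mul, abs_of_nonneg (Real.exp_nonneg _),
      abs_of_nonneg (le_of_lt (inv_pos.2 sqrt2pi_pos))]
    ring
  rw [this]
  calc (|t| * Real.exp (-t^2/2)) * (Real.sqrt (2*Real.pi))⁻¹
      ≤ Real.exp (-(1/2)) * (Real.sqrt (2*Real.pi))⁻¹ :=
        mul_le_mul_of_nonneg_right key (le_of_lt (inv_pos.2 sqrt2pi_pos))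
    _ ≤ 1/4 := by
        rw [mul_inv_le_iff₀ sqrt2pi_pos]  -- maybe name differs
        nlinarith [h4, Real.exp_pos (-(1/2:ℝ))]

lemma stdphi_lipschitz (a b : ℝ) : |stdphi b - stdphi a| ≤ (1/4) * |b - a| := by
  have := Convex.norm_image_sub_le_of_norm_hasDerivWithin_le
    (f := stdphi) (f' := fun t => -t * stdphi t) (C := 1/4) (s := Set.univ)
    (fun t _ => (hasDerivAt_stdphi t).hasDerivWithinAt)
    (fun t _ => by rw [Real.norm_eq_abs]; exact deriv_stdphi_bound t)
    convex_univ (Set.mem_univ a) (Set.mem_univ b)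
  simpa [Real.norm_eq_abs, mul_comm] using this

lemma phibar_sub (a b : ℝ) : Phibar a - Phibar b = ∫ t in a..b, stdphi t := by
  have ha : Phibar a = (∫ t, stdphi t) - ∫ t in Iic a, stdphi t := by
    rw [← intervalIntegral.integral_Iic_add_Ioi stdphi_integrable.integrableOn stdphi_integrable.integrableOn]
    unfold Phibar; ring
  have hb : Phibar b = (∫ t, stdphi t) - ∫ t in Iic b, stdphi t := by
    rw [← intervalIntegral.integral_Iic_add_Ioi stdphi_integrable.integrableOn stdphi_integrable.integrableOn]
    unfold Phibar; ring
  rw [ha, hb, ← intervalIntegral.integral_Iic_sub_Iic stdphi_integrable.integrableOn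
    stdphi_integrable.integrableOn]
  ring

lemma phibar_lipschitz : LipschitzWith (1/2) Phibar := by
  apply LipschitzWith.of_dist_le_mul
  intro a b
  rw [Real.dist_eq, Real.dist_eq, phibar_sub a b]
  have h := intervalIntegral.norm_integral_le_of_norm_le_const
    (f := stdphi) (C := 1/2) (a := a) (b := b)
    (fun t _ => by rw [Real.norm_eq_abs, abs_of_nonneg (stdphi_nonneg t)]; exact stdphi_le_half t)
  rw [Real.norm_eq_abs] at h
  calc |∫ t in a..b, stdphi t| ≤ 1/2 * |b - a| := h
    _ = (1/2 : ℝ≥0) * |a - b| := by rw [abs_sub_comm]; norm_num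

lemma phibar_nonneg (x : ℝ) : 0 ≤ Phibar x :=
  setIntegral_nonneg measurableSet_Ioi fun t _ => stdphi_nonneg t

lemma phibar_le (x : ℝ) : Phibar x ≤ ∫ t, stdphi t := by
  unfold Phibar
  exact setIntegral_le_integral stdphi_integrable (ae_of_all _ fun t => stdphi_nonneg t)

lemma phibar_taylor (a b : ℝ) :
    |Phibar b - Phibar a + stdphi a * (b - a)| ≤ (b - a)^2 / 4 := by
  have h1 : Phibar b - Phibar a = -∫ t in a..b, stdphi t := by
    rw [← phibar_sub a b]; ring
  have h2 : stdphi a * (b - a) = ∫ t in a..b, stdphi a := by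
    rw [intervalIntegral.integral_const]; ring_nf
  have hInt : IntervalIntegrable stdphi volume a b := stdphi_integrable.intervalIntegrable
  have h3 : Phibar b - Phibar a + stdphi a * (b - a)
      = ∫ t in a..b, (stdphi a - stdphi t) := by
    rw [h1, h2, intervalIntegral.integral_sub (intervalIntegrable_const) hInt]
    ring
  rw [h3]
  have hb : ∀ t ∈ Set.uIoc a b, ‖stdphi a - stdphi t‖ ≤ 1/4 * |b - a| := by
    intro t ht
    rw [Set.mem_uIoc] at ht
    have h4 : |t - a| ≤ |b - a| := by
      rcases ht with ⟨h5, h6⟩ | ⟨h5, h6⟩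
      · rw [abs_of_nonneg (by linarith), abs_of_nonneg (by linarith)]; linarith
      · rw [abs_of_nonpos (by linarith), abs_of_nonpos (by linarith)]; linarith
    calc ‖stdphi a - stdphi t‖ = |stdphi t - stdphi a| := by
          rw [Real.norm_eq_abs, abs_sub_comm]
      _ ≤ 1/4 * |t - a| := stdphi_lipschitz a t
      _ ≤ 1/4 * |b - a| := by linarith
  have h5 := intervalIntegral.norm_integral_le_of_norm_le_const hb
  rw [Real.norm_eq_abs] at h5
  calc |∫ t in a..b, (stdphi a - stdphi t)| ≤ 1/4 * |b - a| * |b - a| := h5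
    _ = (b-a)^2/4 := by rw [mul_assoc, abs_mul_abs_self]; ring

lemma gaussianPDFReal_zero_one (x : ℝ) : gaussianPDFReal 0 1 x = stdphi x := by
  unfold gaussianPDFReal stdphi
  norm_num

lemma gaussianReal_Iic {σ : ℝ} (hσ : 0 < σ) (μ c : ℝ) :
    gaussianReal μ (σ^2).toNNReal (Iic c) = ENNReal.ofReal (Phibar ((μ - c)/σ)) := by
  have hmap : gaussianReal μ (σ^2).toNNReal
      = ((gaussianReal 0 1).map (σ * ·)).map (· + μ) := by
    rw [gaussianReal_map_const_mul (μ := 0) (v := 1) σ, gaussianReal_map_add_const]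
    congr 1
    · ring
    · ext
      simp [Real.coe_toNNReal _ (sq_nonneg σ)]
  have hm1 : Measurable fun x : ℝ => x + μ := measurable_add_const μ
  have hm2 : Measurable fun x : ℝ => σ * x := measurable_const_mul σ
  rw [hmap, Measure.map_apply hm1 measurableSet_Iic,
    Measure.map_apply hm2 (hm1 measurableSet_Iic)]
  have hset : ((σ * ·) ⁻¹' ((· + μ) ⁻¹' Iic c)) = Iic ((c - μ)/σ) := by
    ext x
    simp only [Set.mem_preimage, Set.mem_Iic]
    rw [le_div_iff₀ hσ]
    constructor <;> intro hx <;> nlinarith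
  rw [hset, gaussianReal_apply_eq_integral 0 one_ne_zero]
  congr 1
  have : (∫ x in Iic ((c - μ)/σ), gaussianPDFReal 0 1 x)
      = ∫ x in Iic ((c - μ)/σ), stdphi (-x) := by
    refine setIntegral_congr_fun measurableSet_Iic fun x _ => ?_
    rw [stdphi_neg, gaussianPDFReal_zero_one]
  rw [this, integral_comp_neg_Iic]
  rw [show -((c - μ)/σ) = (μ - c)/σ by ring]
  rfl


/-- Bootstrap probability of a nearly flat region: for bounded measurable `h`,
with `U* ~ N(u, σ²I_m)` and `V* ~ N(v, σ²)` independent, the probability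
`P(V* ≤ v_h − h(U*))` equals `Φ̄((v − v_h + E h(U*))/σ)` up to an error of
second order in `‖h‖_∞`. -/
theorem stmt_2 (m : ℕ) (σ : ℝ) (hσ : 0 < σ) (h : (Fin m → ℝ) → ℝ)
    (hmeas : Measurable h) (hbdd : BddAbove (Set.range fun x => |h x|))
    (u : Fin m → ℝ) (v vh : ℝ) :
    |(((gaussianPi u (σ ^ 2).toNNReal).prod (gaussianReal v (σ ^ 2).toNNReal))
        {p : (Fin m → ℝ) × ℝ | p.2 ≤ vh - h p.1}).toReal
      - Phibar ((v - vh + ∫ x, h x ∂(gaussianPi u (σ ^ 2).toNNReal)) / σ)|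
      ≤ (⨆ x, |h x|) ^ 2 / σ ^ 2 := by
  set μP := gaussianPi u (σ ^ 2).toNNReal with hμP
  haveI : IsProbabilityMeasure μP := by
    rw [hμP]; unfold gaussianPi; infer_instance
  set M := ⨆ x, |h x| with hMdef
  have hM : ∀ x, |h x| ≤ M := fun x => le_ciSup hbdd x
  have hM0 : 0 ≤ M := le_trans (abs_nonneg _) (hM fun _ => 0)
  have hInt : Integrable h μP :=
    ⟨hmeas.aestronglyMeasurable, HasFiniteIntegral.of_bounded (C := M)
      (ae_of_all _ fun x => by rw [Real.norm_eq_abs]; exact hM x)⟩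
  set E := ∫ x, h x ∂μP with hEdef
  have hE : |E| ≤ M := by
    rw [hEdef, ← Real.norm_eq_abs]
    have := norm_integral_le_of_norm_le_const (μ := μP) (f := h) (C := M)
      (ae_of_all _ fun x => by rw [Real.norm_eq_abs]; exact hM x)
    simpa using this
  set a := (v - vh + E)/σ with hadef
  -- measurability of the region
  have hSm : MeasurableSet {p : (Fin m → ℝ) × ℝ | p.2 ≤ vh - h p.1} :=
    measurableSet_le measurable_snd (measurable_const.sub (hmeas.comp measurable_fst))
  -- the function under the integral
  have hgm : Measurable fun x => Phibar ((v - vh + h x)/σ) :=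
    (phibar_lipschitz.continuous.measurable).comp
      ((measurable_const.add hmeas).div_const σ)
  -- Fubini + CDF computation
  have hLHS : (((μP).prod (gaussianReal v (σ ^ 2).toNNReal))
        {p : (Fin m → ℝ) × ℝ | p.2 ≤ vh - h p.1}).toReal
      = ∫ x, Phibar ((v - vh + h x)/σ) ∂μP := by
    rw [Measure.prod_apply hSm]
    have hsl : ∀ x : Fin m → ℝ,
        gaussianReal v (σ ^ 2).toNNReal
          (Prod.mk x ⁻¹' {p : (Fin m → ℝ) × ℝ | p.2 ≤ vh - h p.1})
        = ENNReal.ofReal (Phibar ((v - vh + h x)/σ)) := by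
      intro x
      have hpre : (Prod.mk x ⁻¹' {p : (Fin m → ℝ) × ℝ | p.2 ≤ vh - h p.1})
          = Iic (vh - h x) := rfl
      rw [hpre, gaussianReal_Iic hσ v (vh - h x),
        show v - (vh - h x) = v - vh + h x by ring]
    rw [lintegral_congr hsl,
      ← integral_eq_lintegral_of_nonneg_ae (ae_of_all _ fun x => phibar_nonneg _)
        hgm.aestronglyMeasurable]
  rw [hLHS]
  -- Taylor estimate, integrated
  set F := fun x => Phibar ((v - vh + h x)/σ) - Phibar a + stdphi a * ((h x - E)/σ)
    with hFdef
  have hgInt : Integrable (fun x => Phibar ((v - vh + h x)/σ)) μP :=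
    ⟨hgm.aestronglyMeasurable, HasFiniteIntegral.of_bounded (C := ∫ t, stdphi t)
      (ae_of_all _ fun x => by
        rw [Real.norm_eq_abs, abs_of_nonneg (phibar_nonneg _)]; exact phibar_le _)⟩
  have hlinInt : Integrable (fun x => stdphi a * ((h x - E)/σ)) μP :=
    (((hInt.sub (integrable_const E)).div_const σ).const_mul (stdphi a))
  have hFInt : Integrable F μP := (hgInt.sub (integrable_const _)).add hlinInt
  have hptw : ∀ x, ‖F x‖ ≤ M^2/σ^2 := by
    intro x
    have ht := phibar_taylor a ((v - vh + h x)/σ)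
    have hdiff : (v - vh + h x)/σ - a = (h x - E)/σ := by
      rw [hadef]; ring
    rw [hdiff] at ht
    rw [hFdef, Real.norm_eq_abs]
    refine ht.trans ?_
    have h2M : |h x - E| ≤ 2*M := by
      calc |h x - E| ≤ |h x| + |E| := abs_sub _ _
        _ ≤ 2*M := by linarith [hM x, hE]
    have hsq : (h x - E)^2 ≤ (2*M)^2 := by
      rw [← sq_abs]
      exact pow_le_pow_left₀ (abs_nonneg _) h2M 2
    rw [div_pow]
    rw [div_div]
    rw [div_le_div_iff₀ (by positivity) (by positivity)]
    nlinarith [sq_nonneg σ, hσ]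
  have hIF : ∫ x, F x ∂μP = (∫ x, Phibar ((v - vh + h x)/σ) ∂μP) - Phibar a := by
    have hz : ∫ x, stdphi a * ((h x - E)/σ) ∂μP = 0 := by
      rw [integral_const_mul, integral_div, integral_sub hInt (integrable_const E),
        integral_const]
      simp [hEdef]
    calc ∫ x, F x ∂μP
        = (∫ x, (Phibar ((v - vh + h x)/σ) - Phibar a) ∂μP)
          + ∫ x, stdphi a * ((h x - E)/σ) ∂μP :=
          integral_add (hgInt.sub (integrable_const _)) hlinInt
      _ = ((∫ x, Phibar ((v - vh + h x)/σ) ∂μP) - ∫ _x, (Phibar a) ∂μP) + 0 := by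
          rw [integral_sub hgInt (integrable_const _), hz]
      _ = (∫ x, Phibar ((v - vh + h x)/σ) ∂μP) - Phibar a := by
          rw [integral_const]; simp
  have hfinal : ‖∫ x, F x ∂μP‖ ≤ M^2/σ^2 := by
    have := norm_integral_le_of_norm_le_const (μ := μP) (f := F) (C := M^2/σ^2)
      (ae_of_all _ hptw)
    simpa using this
  rw [hIF] at hfinal
  rw [← Real.norm_eq_abs]
  exact hfinal
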